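/- Let α, β be real numbers and γ, λ, μ be complex numbers satisfying α·|λ|² + γ·λ·conj(μ) + conj(γ)·conj(λ)·μ + β·|μ|² = 0. Define f⁺ := (conj(λ)·α + conj(μ)·γ) + (conj(λ)·conj(γ) + conj(μ)·β) and f⁻ := (conj(λ)·α + conj(μ)·γ) - (conj(λ)·conj(γ) + conj(μ)·β). Then |f⁺|² = |λ - μ|²·(|γ|² - α·β) and |f⁻|² = |λ + μ|²·(|γ|² - α·β). -/

import Mathlib

open Complex

/-- Identity from the proof of Theorem 7 (complex torus case): if
`α|λ|² + γλμ̄ + γ̄λ̄μ + β|μ|² = 0` then `|f^±|² = |λ∓μ|²(|γ|² - αβ)` where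
`f^± = (λ̄α + μ̄γ) ± (λ̄γ̄ + μ̄β)`. -/
theorem stmt_7 (α β : ℝ) (γ lam mu : ℂ)
    (h : (α : ℂ) * (‖lam‖ : ℂ) ^ 2 + γ * lam * (starRingEnd ℂ) mu +
      (starRingEnd ℂ) γ * (starRingEnd ℂ) lam * mu + (β : ℂ) * (‖mu‖ : ℂ) ^ 2 = 0)
    (fplus fminus : ℂ)
    (hfp : fplus = ((starRingEnd ℂ) lam * (α : ℂ) + (starRingEnd ℂ) mu * γ) +
      ((starRingEnd ℂ) lam * (starRingEnd ℂ) γ + (starRingEnd ℂ) mu * (β : ℂ)))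
    (hfm : fminus = ((starRingEnd ℂ) lam * (α : ℂ) + (starRingEnd ℂ) mu * γ) -
      ((starRingEnd ℂ) lam * (starRingEnd ℂ) γ + (starRingEnd ℂ) mu * (β : ℂ))) :
    (‖fplus‖) ^ 2 = (‖(lam - mu)‖) ^ 2 * ((‖γ‖) ^ 2 - α * β) ∧
    (‖fminus‖) ^ 2 = (‖(lam + mu)‖) ^ 2 * ((‖γ‖) ^ 2 - α * β) := by
  have key : ∀ z : ℂ, ((‖z‖ : ℂ)) ^ 2 = z * (starRingEnd ℂ) z := by
    intro z
    rw [← Complex.ofReal_pow, Complex.sq_norm, Complex.mul_conj]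
  have h' := h
  rw [key lam, key mu] at h'
  constructor
  · have e : ((‖fplus‖ : ℂ)) ^ 2 =
        ((‖lam - mu‖ : ℂ)) ^ 2 * (((‖γ‖ : ℂ)) ^ 2 - (α : ℂ) * β) := by
      rw [key, key, key, hfp]
      simp only [map_add, map_mul, map_sub, Complex.conj_conj, Complex.conj_ofReal]
      linear_combination ((α : ℂ) + β + γ + (starRingEnd ℂ) γ) * h'
    exact_mod_cast e
  · have e : ((‖fminus‖ : ℂ)) ^ 2 =
        ((‖lam + mu‖ : ℂ)) ^ 2 * (((‖γ‖ : ℂ)) ^ 2 - (α : ℂ) * β) := by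
      rw [key, key, key, hfm]
      simp only [map_add, map_mul, map_sub, Complex.conj_conj, Complex.conj_ofReal]
      linear_combination ((α : ℂ) + β - γ - (starRingEnd ℂ) γ) * h'
    exact_mod_cast e
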